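/- Let G be a group, r a natural number, and for each i ∈ Fin r let χᵢ : G →* ℂˣ be a group homomorphism and Kᵢ ≤ G a subgroup. Let N = ⋂ᵢ ker χᵢ. Assume: (a) for each i, the restriction of χᵢ to Kᵢ is surjective onto ℂˣ; and (b) Kⱼ ≤ ker χᵢ whenever i ≠ j. Then for every subset S ⊆ Fin r, an element g ∈ G satisfies χᵢ(g) = 1 for all i ∈ S if and only if g can be written as g = n·∏_{j ∉ S} kⱼ with n ∈ N and kⱼ ∈ Kⱼ for each j ∉ S (product over the complement of S in increasing order of j). In particular {g : ∀ i ∈ S, χᵢ(g) = 1} is a normal subgroup of G. -/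

import Mathlib

lemma chi_prod_ofFn {G : Type*} [Group G] {r : ℕ} (χ : Fin r → (G →* ℂˣ))
    (kk : Fin r → G) (i : Fin r) (h : ∀ j, j ≠ i → χ i (kk j) = 1) :
    χ i ((List.ofFn kk).prod) = χ i (kk i) := by
  have h1 : χ i ((List.ofFn kk).prod) = ∏ j, χ i (kk j) := by
    rw [map_list_prod]
    rw [show List.map (χ i) (List.ofFn kk) = List.ofFn (fun j => χ i (kk j)) from
      List.map_ofFn, List.prod_ofFn]
  rw [h1]
  exact Finset.prod_eq_single i (fun j _ hj => h j hj) (by simp)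

/-- The subgroup of `G` leaving invariant the level sets of `fᵢ` for `i ∈ S`, i.e.
`{g | ∀ i ∈ S, χᵢ(g) = 1}`, consists exactly of the products `n * ∏_{j ∉ S} kⱼ` with
`n ∈ N = ⋂ᵢ ker χᵢ` and `kⱼ ∈ Kⱼ` (encoded by taking `kⱼ = 1` for `j ∈ S`), and is a
normal subgroup of `G`. -/
theorem level_set_stabilizer_of_linear_free_divisor_group
    {G : Type*} [Group G] (r : ℕ)
    (χ : Fin r → (G →* ℂˣ)) (K : Fin r → Subgroup G)
    (N : Subgroup G) (hN : N = ⨅ i, (χ i).ker)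
    (hsurj : ∀ i, ∀ u : ℂˣ, ∃ g ∈ K i, χ i g = u)
    (hker : ∀ i j, i ≠ j → K j ≤ (χ i).ker)
    (S : Set (Fin r)) :
    (∀ g : G, (∀ i ∈ S, χ i g = 1) ↔
      ∃ (nn : G) (kk : Fin r → G), nn ∈ N ∧ (∀ j, kk j ∈ K j) ∧ (∀ j ∈ S, kk j = 1) ∧
        g = nn * (List.ofFn kk).prod) ∧
    ∃ H : Subgroup G, H.Normal ∧ ∀ g : G, g ∈ H ↔ (∀ i ∈ S, χ i g = 1) := by
  classical
  constructor
  · intro g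
    constructor
    · intro hg
      -- choose kk
      have hchoice : ∀ j : Fin r, ∃ k : G, k ∈ K j ∧ χ j k = (if j ∈ S then 1 else χ j g)
          ∧ (j ∈ S → k = 1) := by
        intro j
        by_cases hj : j ∈ S
        · exact ⟨1, (K j).one_mem, by simp [hj], fun _ => rfl⟩
        · obtain ⟨k, hk, hkχ⟩ := hsurj j (χ j g)
          exact ⟨k, hk, by simp [hj, hkχ], fun h => absurd h hj⟩
      choose kk hkK hkχ hkS using hchoice
      refine ⟨g * ((List.ofFn kk).prod)⁻¹, kk, ?_, hkK, hkS, by group⟩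
      rw [hN, Subgroup.mem_iInf]
      intro i
      have hprod : χ i ((List.ofFn kk).prod) = χ i (kk i) :=
        chi_prod_ofFn χ kk i (fun j hj => hker i j (Ne.symm hj) (hkK j))
      rw [MonoidHom.mem_ker, map_mul, map_inv, hprod, hkχ i]
      by_cases hi : i ∈ S
      · simp [hi, hg i hi]
      · simp [hi]
    · rintro ⟨nn, kk, hnn, hkK, hkS, rfl⟩
      intro i hi
      have hprod : χ i ((List.ofFn kk).prod) = χ i (kk i) :=
        chi_prod_ofFn χ kk i (fun j hj => hker i j (Ne.symm hj) (hkK j))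
      rw [hN, Subgroup.mem_iInf] at hnn
      rw [map_mul, hprod, hkS i hi, hnn i, map_one, one_mul]
  · refine ⟨⨅ i ∈ S, (χ i).ker, ⟨?_⟩, ?_⟩
    · intro n hn h
      simp only [Subgroup.mem_iInf] at hn ⊢
      intro i hi
      have := hn i hi
      rw [MonoidHom.mem_ker] at this ⊢
      simp [this]
    · intro g
      simp [Subgroup.mem_iInf, MonoidHom.mem_ker]
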